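/- Let p be a prime and n a natural number. Let λ_0 < λ_1 < … < λ_j be a strictly increasing chain of proper nontrivial setoids on Fin n and let K ≤ Σ_n be its stabilizer; set λ_{j+1} = ⊤. Let D ≤ K be an elementary abelian p-subgroup acting freely on Fin n and not transitively on Fin n. Suppose that for some index i with 0 ≤ i ≤ j+1, D acts transitively on the set of λ_i-classes and no non-identity element d of D satisfies d x ∼_{λ_i} x for all x. Then there exists τ in the centralizer C of D in K with τ ∉ D, τ ≠ 1, τ² = 1, and τ a product of |D| disjoint transpositions; in particular the support {x : τ x ≠ x} has exactly 2·|D| elements. -/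

import Mathlib

/-- The chain `λ_0 < … < λ_j` extended by `λ_{-1} = ⊥` and `λ_{j+1} = ⊤`, reindexed so
that `extChain lam (i + 1) = λ_i` for `0 ≤ i ≤ j`, `extChain lam 0 = ⊥`, and
`extChain lam (j + 2) = ⊤`. -/
def extChain {n j : ℕ} (lam : Fin (j + 1) → Setoid (Fin n)) : ℕ → Setoid (Fin n)
  | 0 => ⊥
  | t + 1 => if h : t < j + 1 then lam ⟨t, h⟩ else ⊤

lemma extChain_mono {n j : ℕ} {lam : Fin (j + 1) → Setoid (Fin n)} (hm : Monotone lam) :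
    Monotone (extChain lam) := by
  apply monotone_nat_of_le_succ
  intro s
  match s with
  | 0 => exact bot_le
  | s + 1 =>
    show (if h : s < j + 1 then lam ⟨s, h⟩ else ⊤) ≤
      (if h : s + 1 < j + 1 then lam ⟨s + 1, h⟩ else ⊤)
    split_ifs with h1 h2 h2
    · exact hm (by simp [Fin.mk_le_mk])
    · exact le_top
    · exact absurd (by omega : s < j + 1) h1
    · exact le_rfl

theorem stmt13 (p n j : ℕ) (hp : p.Prime)
    (lam : Fin (j + 1) → Setoid (Fin n)) (hmono : StrictMono lam)
    (hproper : ∀ t, ⊥ < lam t ∧ lam t < ⊤)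
    (K : Subgroup (Equiv.Perm (Fin n)))
    (hK : ∀ g, g ∈ K ↔ ∀ (t : Fin (j + 1)) (x y : Fin n),
      (lam t).r x y ↔ (lam t).r (g x) (g y))
    (D : Subgroup (Equiv.Perm (Fin n))) (hDK : D ≤ K)
    (hab : ∀ a ∈ D, ∀ b ∈ D, a * b = b * a)
    (hexp : ∀ d ∈ D, d ^ p = 1)
    (hfree : ∀ d ∈ D, d ≠ 1 → ∀ x : Fin n, d x ≠ x)
    (hntrans : ¬ ∀ x y : Fin n, ∃ d ∈ D, d x = y)
    (i : ℕ) (hi : i ≤ j + 1)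
    (htrans : ∀ x y : Fin n, ∃ d ∈ D, (extChain lam (i + 1)).r (d x) y)
    (hS : ∀ d ∈ D, (∀ x : Fin n, (extChain lam (i + 1)).r (d x) x) → d = 1) :
    ∃ τ ∈ Subgroup.centralizer (D : Set (Equiv.Perm (Fin n))) ⊓ K,
      τ ∉ D ∧ τ ≠ 1 ∧ τ ^ 2 = 1 ∧
      (Equiv.Perm.support τ).card = 2 * Nat.card D := by
  classical
  set Λ : Setoid (Fin n) := extChain lam (i + 1) with hΛdef
  -- elements of K preserve every extChain setoid
  have hKE : ∀ g ∈ K, ∀ (s : ℕ) (x y : Fin n),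
      (extChain lam s).r x y ↔ (extChain lam s).r (g x) (g y) := by
    intro g hg s x y
    match s with
    | 0 =>
      show x = y ↔ g x = g y
      exact ⟨fun h => by rw [h], fun h => g.injective h⟩
    | s + 1 =>
      show (if h : s < j + 1 then lam ⟨s, h⟩ else ⊤).r x y ↔
        (if h : s < j + 1 then lam ⟨s, h⟩ else ⊤).r (g x) (g y)
      by_cases h : s < j + 1
      · rw [dif_pos h]; exact (hK g).mp hg ⟨s, h⟩ x y
      · rw [dif_neg h]; exact iff_of_true trivial trivial
  have hmonoE : ∀ {s s' : ℕ}, s ≤ s' → ∀ {x y : Fin n},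
      (extChain lam s).r x y → (extChain lam s').r x y := by
    intro s s' hss x y hxy
    exact Setoid.le_def.mp (extChain_mono hmono.monotone hss) hxy
  -- Claim A: an element of D moving some point within its Λ-class is the identity
  have claimA : ∀ c : Equiv.Perm (Fin n), c ∈ D → ∀ u : Fin n, Λ.r (c u) u → c = 1 := by
    intro c hc u hcu
    refine hS c hc ?_
    intro x
    obtain ⟨e, he, hex⟩ := htrans u x
    have h1 : Λ.r (c (e u)) (c x) := (hKE c (hDK hc) (i + 1) _ _).mp hex
    have h2 : c (e u) = e (c u) := by
      have hcom := hab c hc e he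
      calc c (e u) = (c * e) u := rfl
        _ = (e * c) u := by rw [hcom]
        _ = e (c u) := rfl
    have h3 : Λ.r (e (c u)) (e u) := (hKE e (hDK he) (i + 1) _ _).mp hcu
    have h4 : Λ.r (c (e u)) x := by rw [h2]; exact Λ.iseqv.trans h3 hex
    exact Λ.iseqv.trans (Λ.iseqv.symm h1) h4
  -- uniqueness of representation d ↦ d w
  have hu : ∀ (w : Fin n) (d e : D),
      (d : Equiv.Perm (Fin n)) w = (e : Equiv.Perm (Fin n)) w → d = e := by
    intro w d e hde
    have h1 : ((e⁻¹ * d : D) : Equiv.Perm (Fin n)) w = w := by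
      simp [Equiv.Perm.mul_apply, hde]
    have h2 : ((e⁻¹ * d : D) : Equiv.Perm (Fin n)) = 1 :=
      claimA _ (e⁻¹ * d).2 w (by rw [h1])
    have h3 : (e⁻¹ * d : D) = 1 := by
      exact Subtype.ext h2
    exact (inv_mul_eq_one.mp h3).symm
  -- two Λ-equivalent points in different D-orbits
  have hne : ∃ x y : Fin n, ∀ d ∈ D, d x ≠ y := by push_neg at hntrans; exact hntrans
  obtain ⟨x₁, y₁, hx₁y₁⟩ := hne
  obtain ⟨e₀, he₀, hv⟩ := htrans y₁ x₁
  have hvo : ∀ d ∈ D, d x₁ ≠ e₀ y₁ := by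
    intro d hd hcon
    refine hx₁y₁ (e₀⁻¹ * d) (mul_mem (inv_mem he₀) hd) ?_
    show e₀⁻¹ (d x₁) = y₁
    rw [hcon]; simp
  have hvne : x₁ ≠ e₀ y₁ := by
    have := hvo 1 (one_mem D); simpa using this
  -- the minimal threshold over pairs of distinct points of the class B of x₁
  set S : Set ℕ := {s | ∃ u v : Fin n, Λ.r u x₁ ∧ Λ.r v x₁ ∧ u ≠ v ∧ (extChain lam s).r u v}
    with hSdef
  have hSne : (i + 1) ∈ S :=
    ⟨x₁, e₀ y₁, Λ.iseqv.refl x₁, hv, hvne, Λ.iseqv.symm hv⟩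
  set T : ℕ := sInf S with hTdef
  have hTmem : T ∈ S := Nat.sInf_mem ⟨_, hSne⟩
  have hTle : T ≤ i + 1 := Nat.sInf_le hSne
  obtain ⟨x₀, y₀, hx₀B, hy₀B, hxy_ne, hxy_rel⟩ := hTmem
  have hmin : ∀ s < T, ∀ u v : Fin n, Λ.r u x₁ → Λ.r v x₁ → u ≠ v →
      ¬ (extChain lam s).r u v := by
    intro s hsT u v h1 h2 h3 h4
    exact Nat.notMem_of_lt_sInf hsT ⟨u, v, h1, h2, h3, h4⟩
  -- Claim B: for s < T, the extChain-s class of any point d u (u in B) is a singleton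
  have claimB : ∀ s : ℕ, s < T → ∀ u : Fin n, Λ.r u x₁ → ∀ (d : D) (z : Fin n),
      (extChain lam s).r ((d : Equiv.Perm (Fin n)) u) z → z = (d : Equiv.Perm (Fin n)) u := by
    intro s hsT u huB d z hrel
    have hs_le : s ≤ i + 1 := by omega
    have h1 : (extChain lam s).r u ((d : Equiv.Perm (Fin n))⁻¹ z) := by
      have := (hKE _ (hDK (d⁻¹ : D).2) s _ _).mp hrel
      simpa using this
    have h2 : Λ.r ((d : Equiv.Perm (Fin n))⁻¹ z) x₁ :=
      Λ.iseqv.trans (Λ.iseqv.symm (hmonoE hs_le h1)) huB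
    have h3 : u = (d : Equiv.Perm (Fin n))⁻¹ z := by
      by_contra hne'
      exact hmin s hsT u _ huB h2 hne' h1
    rw [h3]; simp
  -- x₀ and y₀ are in different D-orbits
  have hdiff : ∀ d : D, (d : Equiv.Perm (Fin n)) x₀ ≠ y₀ := by
    intro d hcon
    have h1 : Λ.r ((d : Equiv.Perm (Fin n)) x₀) x₀ := by
      rw [hcon]; exact Λ.iseqv.trans hy₀B (Λ.iseqv.symm hx₀B)
    have h2 := claimA _ d.2 _ h1
    apply hxy_ne
    rw [← hcon, h2]; simp
  -- definition of the function f underlying τ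
  obtain ⟨f, hfx, hfy, hfo⟩ : ∃ f : Fin n → Fin n,
      (∀ d : D, f ((d : Equiv.Perm (Fin n)) x₀) = (d : Equiv.Perm (Fin n)) y₀) ∧
      (∀ d : D, f ((d : Equiv.Perm (Fin n)) y₀) = (d : Equiv.Perm (Fin n)) x₀) ∧
      (∀ z : Fin n, (∀ d : D, (d : Equiv.Perm (Fin n)) x₀ ≠ z) →
        (∀ d : D, (d : Equiv.Perm (Fin n)) y₀ ≠ z) → f z = z) := by
    refine ⟨fun z =>
      if h : ∃ d : D, (d : Equiv.Perm (Fin n)) x₀ = z then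
        (h.choose : Equiv.Perm (Fin n)) y₀
      else if h' : ∃ d : D, (d : Equiv.Perm (Fin n)) y₀ = z then
        (h'.choose : Equiv.Perm (Fin n)) x₀
      else z, ?_, ?_, ?_⟩
    · intro d
      have h : ∃ d' : D, (d' : Equiv.Perm (Fin n)) x₀ = (d : Equiv.Perm (Fin n)) x₀ := ⟨d, rfl⟩
      simp only [dif_pos h]
      rw [hu x₀ h.choose d h.choose_spec]
    · intro d
      have h1 : ¬ ∃ d' : D, (d' : Equiv.Perm (Fin n)) x₀ = (d : Equiv.Perm (Fin n)) y₀ := by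
        rintro ⟨d', hd'⟩
        refine hdiff (d⁻¹ * d') ?_
        show (d : Equiv.Perm (Fin n))⁻¹ ((d' : Equiv.Perm (Fin n)) x₀) = y₀
        rw [hd']; simp
      have h2 : ∃ d' : D, (d' : Equiv.Perm (Fin n)) y₀ = (d : Equiv.Perm (Fin n)) y₀ := ⟨d, rfl⟩
      simp only [dif_neg h1, dif_pos h2]
      rw [hu y₀ h2.choose d h2.choose_spec]
    · intro z h1 h2
      simp only [dif_neg (not_exists.mpr h1), dif_neg (not_exists.mpr h2)]
  have hinv : ∀ z, f (f z) = z := by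
    intro z
    by_cases h1 : ∃ d : D, (d : Equiv.Perm (Fin n)) x₀ = z
    · obtain ⟨d, rfl⟩ := h1; rw [hfx, hfy]
    · by_cases h2 : ∃ d : D, (d : Equiv.Perm (Fin n)) y₀ = z
      · obtain ⟨d, rfl⟩ := h2; rw [hfy, hfx]
      · rw [hfo z (not_exists.mp h1) (not_exists.mp h2),
          hfo z (not_exists.mp h1) (not_exists.mp h2)]
  obtain ⟨τ, hτf⟩ : ∃ τ : Equiv.Perm (Fin n), ∀ z, τ z = f z :=
    ⟨⟨f, f, hinv, hinv⟩, fun _ => rfl⟩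
  have hτx : ∀ d : D, τ ((d : Equiv.Perm (Fin n)) x₀) = (d : Equiv.Perm (Fin n)) y₀ :=
    fun d => (hτf _).trans (hfx d)
  have hτy : ∀ d : D, τ ((d : Equiv.Perm (Fin n)) y₀) = (d : Equiv.Perm (Fin n)) x₀ :=
    fun d => (hτf _).trans (hfy d)
  have hτo : ∀ z : Fin n, (∀ d : D, (d : Equiv.Perm (Fin n)) x₀ ≠ z) →
      (∀ d : D, (d : Equiv.Perm (Fin n)) y₀ ≠ z) → τ z = z :=
    fun z h1 h2 => (hτf _).trans (hfo z h1 h2)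
  have hτinv : ∀ z, τ (τ z) = z := by
    intro z; rw [hτf, hτf]; exact hinv z
  -- τ commutes with D
  have hcomm : ∀ g ∈ D, g * τ = τ * g := by
    intro g hg
    refine Equiv.ext fun z => ?_
    show g (τ z) = τ (g z)
    set gD : D := ⟨g, hg⟩ with hgD
    by_cases h1 : ∃ d : D, (d : Equiv.Perm (Fin n)) x₀ = z
    · obtain ⟨d, rfl⟩ := h1
      have e1 : g ((d : Equiv.Perm (Fin n)) x₀) = ((gD * d : D) : Equiv.Perm (Fin n)) x₀ := rfl
      rw [hτx d, e1, hτx (gD * d)]; rfl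
    · by_cases h2 : ∃ d : D, (d : Equiv.Perm (Fin n)) y₀ = z
      · obtain ⟨d, rfl⟩ := h2
        have e1 : g ((d : Equiv.Perm (Fin n)) y₀) = ((gD * d : D) : Equiv.Perm (Fin n)) y₀ := rfl
        rw [hτy d, e1, hτy (gD * d)]; rfl
      · have hz1 : ∀ d : D, (d : Equiv.Perm (Fin n)) x₀ ≠ g z := by
          intro d hc
          refine h1 ⟨gD⁻¹ * d, ?_⟩
          show (g : Equiv.Perm (Fin n))⁻¹ ((d : Equiv.Perm (Fin n)) x₀) = z
          rw [hc]; simp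
        have hz2 : ∀ d : D, (d : Equiv.Perm (Fin n)) y₀ ≠ g z := by
          intro d hc
          refine h2 ⟨gD⁻¹ * d, ?_⟩
          show (g : Equiv.Perm (Fin n))⁻¹ ((d : Equiv.Perm (Fin n)) y₀) = z
          rw [hc]; simp
        rw [hτo z (not_exists.mp h1) (not_exists.mp h2), hτo (g z) hz1 hz2]
  -- τ ∈ K
  have hτK : τ ∈ K := by
    rw [hK]
    intro t x y
    have hts : lam t = extChain lam ((t : ℕ) + 1) := by
      show lam t = if h : (t : ℕ) < j + 1 then lam ⟨(t : ℕ), h⟩ else ⊤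
      rw [dif_pos t.isLt, Fin.eta]
    rw [hts]
    set s : ℕ := (t : ℕ) + 1 with hsdef
    by_cases hsT : T ≤ s
    · have hxys : (extChain lam s).r x₀ y₀ := hmonoE hsT hxy_rel
      have hnear : ∀ z, (extChain lam s).r (τ z) z := by
        intro z
        by_cases h1 : ∃ d : D, (d : Equiv.Perm (Fin n)) x₀ = z
        · obtain ⟨d, rfl⟩ := h1
          rw [hτx d]
          exact (extChain lam s).iseqv.symm
            ((hKE (d : Equiv.Perm (Fin n)) (hDK d.2) s x₀ y₀).mp hxys)
        · by_cases h2 : ∃ d : D, (d : Equiv.Perm (Fin n)) y₀ = z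
          · obtain ⟨d, rfl⟩ := h2
            rw [hτy d]
            exact (hKE (d : Equiv.Perm (Fin n)) (hDK d.2) s x₀ y₀).mp hxys
          · rw [hτo z (not_exists.mp h1) (not_exists.mp h2)]
      constructor
      · intro hxy
        exact (extChain lam s).iseqv.trans (hnear x)
          ((extChain lam s).iseqv.trans hxy ((extChain lam s).iseqv.symm (hnear y)))
      · intro hxy
        exact (extChain lam s).iseqv.trans ((extChain lam s).iseqv.symm (hnear x))
          ((extChain lam s).iseqv.trans hxy (hnear y))
    · have hsT' : s < T := not_le.mp hsT
      have key : ∀ a b : Fin n, (extChain lam s).r a b → (extChain lam s).r (τ a) (τ b) := by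
        intro a b hab'
        by_cases h1 : ∃ d : D, (d : Equiv.Perm (Fin n)) x₀ = a ∨ (d : Equiv.Perm (Fin n)) y₀ = a
        · obtain ⟨d, hd⟩ := h1
          have hba : b = a := by
            rcases hd with h | h
            · subst h; exact claimB s hsT' x₀ hx₀B d b hab'
            · subst h; exact claimB s hsT' y₀ hy₀B d b hab'
          subst hba
          exact (extChain lam s).iseqv.refl _
        · by_cases h2 : ∃ d : D, (d : Equiv.Perm (Fin n)) x₀ = b ∨ (d : Equiv.Perm (Fin n)) y₀ = b
          · exfalso
            obtain ⟨d, hd⟩ := h2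
            rcases hd with h | h
            · subst h
              have := claimB s hsT' x₀ hx₀B d a ((extChain lam s).iseqv.symm hab')
              exact h1 ⟨d, Or.inl this.symm⟩
            · subst h
              have := claimB s hsT' y₀ hy₀B d a ((extChain lam s).iseqv.symm hab')
              exact h1 ⟨d, Or.inr this.symm⟩
          · push_neg at h1 h2
            rw [hτo a (fun d => (h1 d).1) (fun d => (h1 d).2),
              hτo b (fun d => (h2 d).1) (fun d => (h2 d).2)]
            exact hab'
      constructor
      · exact key x y
      · intro h
        have := key _ _ h
        rwa [hτinv x, hτinv y] at this
  have hτx₀ : τ x₀ = y₀ := by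
    have := hτx (1 : D); simpa using this
  -- assemble the result
  haveI : Fintype D := Fintype.ofFinite D
  refine ⟨τ, Subgroup.mem_inf.mpr ⟨Subgroup.mem_centralizer_iff.mpr hcomm, hτK⟩, ?_, ?_, ?_, ?_⟩
  · intro hτD
    exact hdiff ⟨τ, hτD⟩ hτx₀
  · intro h
    apply hxy_ne
    have := congrArg (fun σ : Equiv.Perm (Fin n) => σ x₀) h
    simp only [Equiv.Perm.one_apply] at this
    rw [← hτx₀, this]
  · rw [pow_two]
    refine Equiv.ext fun z => ?_
    show τ (τ z) = z
    exact hτinv z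
  · have hsupp : Equiv.Perm.support τ =
        (Finset.univ.image fun d : D => (d : Equiv.Perm (Fin n)) x₀) ∪
        (Finset.univ.image fun d : D => (d : Equiv.Perm (Fin n)) y₀) := by
      ext z
      simp only [Equiv.Perm.mem_support, Finset.mem_union, Finset.mem_image,
        Finset.mem_univ, true_and]
      constructor
      · intro hz
        by_contra hcon
        push_neg at hcon
        exact hz (hτo z hcon.1 hcon.2)
      · rintro (⟨d, rfl⟩ | ⟨d, rfl⟩)
        · rw [hτx d]
          intro hc
          exact hxy_ne ((d : Equiv.Perm (Fin n)).injective hc).symm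
        · rw [hτy d]
          intro hc
          exact hxy_ne ((d : Equiv.Perm (Fin n)).injective hc)
    have hinj1 : Function.Injective fun d : D => (d : Equiv.Perm (Fin n)) x₀ :=
      fun a b h => hu x₀ a b h
    have hinj2 : Function.Injective fun d : D => (d : Equiv.Perm (Fin n)) y₀ :=
      fun a b h => hu y₀ a b h
    have hdisj : Disjoint (Finset.univ.image fun d : D => (d : Equiv.Perm (Fin n)) x₀)
        (Finset.univ.image fun d : D => (d : Equiv.Perm (Fin n)) y₀) := by
      rw [Finset.disjoint_left]
      intro z hz1 hz2
      simp only [Finset.mem_image, Finset.mem_univ, true_and] at hz1 hz2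
      obtain ⟨d, rfl⟩ := hz1
      obtain ⟨e, he⟩ := hz2
      refine hdiff (e⁻¹ * d) ?_
      show (e : Equiv.Perm (Fin n))⁻¹ ((d : Equiv.Perm (Fin n)) x₀) = y₀
      rw [← he]; simp
    rw [hsupp, Finset.card_union_of_disjoint hdisj,
      Finset.card_image_of_injective _ hinj1, Finset.card_image_of_injective _ hinj2,
      Finset.card_univ, Nat.card_eq_fintype_card]
    ring
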